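/- Let G' be a finite AND/OR tree with root s, cost functions p, d, and a fixed linear order on nodes for tie-breaking. Let G0 be the solution base rooted at s that includes, at each internal OR node, its tie-break-least successor minimizing c + p (and all successors at AND nodes), and let Ḡ0 be the disproof base rooted at s that includes, at each internal AND node, its tie-break-least successor minimizing c + d (and all successors at OR nodes). Then the set of nodes common to G0 and Ḡ0 is exactly the set of nodes of the PNS* selection path from s; in particular, G0 and Ḡ0 have exactly one leaf of G' in common, namely the leaf at which the PNS* selection path terminates. -/
import Mathlib


open scoped ENNReal

/-- A node of an AND/OR graph is labeled either OR or AND. -/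
inductive NodeKind : Type
  | orN
  | andN
deriving DecidableEq

/-- A leaf is a solvable terminal, an unsolvable terminal, or a non-terminal leaf. -/
inductive LeafKind : Type
  | solv
  | unsolv
  | nonterm
deriving DecidableEq

/-- The combination rule `Ψ ∈ {sum, max}`. -/
inductive CombRule : Type
  | sum
  | max

/-- A finite acyclic AND/OR graph on a node type `V`: a successor function
(`succ n = ∅` means `n` is a leaf), an OR/AND label on each node, a
terminal/non-terminal designation for leaves, edge costs in `ℝ≥0∞`, and
well-foundedness of the successor relation (no directed cycles). -/
structure AOGraph (V : Type) where
  succ : V → Finset V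
  kind : V → NodeKind
  leafKind : V → LeafKind
  cost : V → V → ℝ≥0∞
  acyclic : WellFounded (fun a b : V => a ∈ succ b)

/-- Combining the values of the successors by `Ψ`. -/
noncomputable def comb {V : Type} (Ψ : CombRule) (s : Finset V) (f : V → ℝ≥0∞) : ℝ≥0∞ :=
  match Ψ with
  | .sum => ∑ x ∈ s, f x
  | .max => s.sup f

/-- `p` is the proof-cost function of `G` with heuristic `h` and rule `Ψ`. -/
def IsProofCost {V : Type} (G : AOGraph V) (h : V → ℝ≥0∞) (Ψ : CombRule)
    (p : V → ℝ≥0∞) : Prop :=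
  ∀ n : V,
    (G.succ n = ∅ →
      p n = (match G.leafKind n with
             | .solv => 0
             | .unsolv => ⊤
             | .nonterm => h n)) ∧
    (G.succ n ≠ ∅ →
      p n = (match G.kind n with
             | .orN => (G.succ n).inf (fun m => G.cost n m + p m)
             | .andN => comb Ψ (G.succ n) (fun m => G.cost n m + p m)))

/-- `d` is the disproof-cost function of `G` with heuristic `h̄` and rule `Ψ`. -/
def IsDisproofCost {V : Type} (G : AOGraph V) (hb : V → ℝ≥0∞) (Ψ : CombRule)
    (d : V → ℝ≥0∞) : Prop :=
  ∀ n : V,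
    (G.succ n = ∅ →
      d n = (match G.leafKind n with
             | .solv => ⊤
             | .unsolv => 0
             | .nonterm => hb n)) ∧
    (G.succ n ≠ ∅ →
      d n = (match G.kind n with
             | .orN => comb Ψ (G.succ n) (fun m => G.cost n m + d m)
             | .andN => (G.succ n).inf (fun m => G.cost n m + d m)))

/-- `m` is the tie-break-least element of `s` minimizing `f`. -/
def TieBreakMin {V : Type} [LinearOrder V] (s : Finset V) (f : V → ℝ≥0∞) (m : V) : Prop :=
  m ∈ s ∧ (∀ x ∈ s, f m ≤ f x) ∧ (∀ x ∈ s, f x = f m → m ≤ x)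

/-- `IsPNSPath G p d s l`: `l` is the PNS* selection path from `s`: at an
internal OR node follow the tie-break-least successor minimizing `c + p`, at
an internal AND node the tie-break-least successor minimizing `c + d`,
terminating at a leaf. -/
inductive IsPNSPath {V : Type} [LinearOrder V] (G : AOGraph V) (p d : V → ℝ≥0∞) :
    V → List V → Prop
  | leaf (n : V) (hleaf : G.succ n = ∅) : IsPNSPath G p d n [n]
  | stepOr (n m : V) (l : List V) (hne : G.succ n ≠ ∅) (hk : G.kind n = .orN)
      (hm : TieBreakMin (G.succ n) (fun x => G.cost n x + p x) m)
      (hrec : IsPNSPath G p d m l) : IsPNSPath G p d n (n :: l)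
  | stepAnd (n m : V) (l : List V) (hne : G.succ n ≠ ∅) (hk : G.kind n = .andN)
      (hm : TieBreakMin (G.succ n) (fun x => G.cost n x + d x) m)
      (hrec : IsPNSPath G p d m l) : IsPNSPath G p d n (n :: l)

/-- Membership in the solution base `G₀` rooted at `s` that includes, at each
internal OR node, its tie-break-least successor minimizing `c + p`, and all
successors at each internal AND node. -/
inductive InGreedyProofBase {V : Type} [LinearOrder V] (G : AOGraph V)
    (p : V → ℝ≥0∞) (s : V) : V → Prop
  | root : InGreedyProofBase G p s s
  | orStep (n m : V) (hn : InGreedyProofBase G p s n) (hne : G.succ n ≠ ∅)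
      (hk : G.kind n = .orN)
      (hm : TieBreakMin (G.succ n) (fun x => G.cost n x + p x) m) :
      InGreedyProofBase G p s m
  | andStep (n m : V) (hn : InGreedyProofBase G p s n) (hne : G.succ n ≠ ∅)
      (hk : G.kind n = .andN) (hm : m ∈ G.succ n) :
      InGreedyProofBase G p s m

/-- Membership in the disproof base `Ḡ₀` rooted at `s` that includes, at each
internal AND node, its tie-break-least successor minimizing `c + d`, and all
successors at each internal OR node. -/
inductive InGreedyDisproofBase {V : Type} [LinearOrder V] (G : AOGraph V)
    (d : V → ℝ≥0∞) (s : V) : V → Prop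
  | root : InGreedyDisproofBase G d s s
  | andStep (n m : V) (hn : InGreedyDisproofBase G d s n) (hne : G.succ n ≠ ∅)
      (hk : G.kind n = .andN)
      (hm : TieBreakMin (G.succ n) (fun x => G.cost n x + d x) m) :
      InGreedyDisproofBase G d s m
  | orStep (n m : V) (hn : InGreedyDisproofBase G d s n) (hne : G.succ n ≠ ∅)
      (hk : G.kind n = .orN) (hm : m ∈ G.succ n) :
      InGreedyDisproofBase G d s m

lemma tieBreakMin_unique {V : Type} [LinearOrder V] {s : Finset V} {f : V → ℝ≥0∞} {m m' : V}
    (h : TieBreakMin s f m) (h' : TieBreakMin s f m') : m = m' := by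
  obtain ⟨hm, hle, htb⟩ := h
  obtain ⟨hm', hle', htb'⟩ := h'
  have e : f m = f m' := le_antisymm (hle _ hm') (hle' _ hm)
  exact le_antisymm (htb _ hm' e.symm) (htb' _ hm e)

lemma pns_head {V : Type} [LinearOrder V] {G : AOGraph V} {p d : V → ℝ≥0∞} {n : V}
    {l : List V} (h : IsPNSPath G p d n l) : n ∈ l := by
  cases h <;> simp

lemma pns_ne_nil {V : Type} [LinearOrder V] {G : AOGraph V} {p d : V → ℝ≥0∞} {n : V}
    {l : List V} (h : IsPNSPath G p d n l) : l ≠ [] := by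
  cases h <;> simp

lemma pns_next_or {V : Type} [LinearOrder V] {G : AOGraph V} {p d : V → ℝ≥0∞} {s : V}
    {l : List V} (hl : IsPNSPath G p d s l) {q n : V} (hq : q ∈ l)
    (hk : G.kind q = .orN)
    (hn : TieBreakMin (G.succ q) (fun x => G.cost q x + p x) n) : n ∈ l := by
  induction hl with
  | leaf n0 hleaf =>
    simp at hq; subst hq
    have := hn.1
    simp [hleaf] at this
  | stepOr n0 m l' hne hk0 hm hrec ih =>
    rcases List.mem_cons.1 hq with rfl | hq'
    · have : n = m := tieBreakMin_unique hn hm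
      subst this
      exact List.mem_cons_of_mem _ (pns_head hrec)
    · exact List.mem_cons_of_mem _ (ih hq')
  | stepAnd n0 m l' hne hk0 hm hrec ih =>
    rcases List.mem_cons.1 hq with rfl | hq'
    · rw [hk] at hk0; cases hk0
    · exact List.mem_cons_of_mem _ (ih hq')

lemma pns_next_and {V : Type} [LinearOrder V] {G : AOGraph V} {p d : V → ℝ≥0∞} {s : V}
    {l : List V} (hl : IsPNSPath G p d s l) {q n : V} (hq : q ∈ l)
    (hk : G.kind q = .andN)
    (hn : TieBreakMin (G.succ q) (fun x => G.cost q x + d x) n) : n ∈ l := by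
  induction hl with
  | leaf n0 hleaf =>
    simp at hq; subst hq
    have := hn.1
    simp [hleaf] at this
  | stepOr n0 m l' hne hk0 hm hrec ih =>
    rcases List.mem_cons.1 hq with rfl | hq'
    · rw [hk] at hk0; cases hk0
    · exact List.mem_cons_of_mem _ (ih hq')
  | stepAnd n0 m l' hne hk0 hm hrec ih =>
    rcases List.mem_cons.1 hq with rfl | hq'
    · have : n = m := tieBreakMin_unique hn hm
      subst this
      exact List.mem_cons_of_mem _ (pns_head hrec)
    · exact List.mem_cons_of_mem _ (ih hq')

lemma both_mem {V : Type} [LinearOrder V] {G : AOGraph V}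
    (htree : ∀ x n n' : V, x ∈ G.succ n → x ∈ G.succ n' → n = n')
    {p d : V → ℝ≥0∞} {s : V} {l : List V}
    (hl : IsPNSPath G p d s l) :
    ∀ n : V, InGreedyProofBase G p s n → InGreedyDisproofBase G d s n → n ∈ l := by
  intro n hpb
  induction hpb with
  | root => intro _; exact pns_head hl
  | orStep q n hq hne hk hm ih =>
    intro hdb
    cases hdb with
    | root => exact pns_head hl
    | andStep q' m hq' hne' hk' hm' =>
      have : q' = q := htree _ _ _ hm'.1 hm.1
      subst this
      rw [hk] at hk'; cases hk'
    | orStep q' m hq' hne' hk' hmem' =>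
      have : q' = q := htree _ _ _ hmem' hm.1
      subst this
      exact pns_next_or hl (ih hq') hk hm
  | andStep q n hq hne hk hm ih =>
    intro hdb
    cases hdb with
    | root => exact pns_head hl
    | andStep q' m hq' hne' hk' hm' =>
      have : q' = q := htree _ _ _ hm'.1 hm
      subst this
      exact pns_next_and hl (ih hq') hk hm'
    | orStep q' m hq' hne' hk' hmem' =>
      have : q' = q := htree _ _ _ hmem' hm
      subst this
      rw [hk] at hk'; cases hk'

lemma path_mem_bases {V : Type} [LinearOrder V] {G : AOGraph V}
    {p d : V → ℝ≥0∞} {s n : V} {l : List V}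
    (hl : IsPNSPath G p d n l) :
    InGreedyProofBase G p s n → InGreedyDisproofBase G d s n →
      ∀ y ∈ l, InGreedyProofBase G p s y ∧ InGreedyDisproofBase G d s y := by
  induction hl with
  | leaf n0 hleaf =>
    intro hp hd y hy
    simp at hy; subst hy; exact ⟨hp, hd⟩
  | stepOr n0 m l' hne hk hm hrec ih =>
    intro hp hd y hy
    rcases List.mem_cons.1 hy with rfl | hy'
    · exact ⟨hp, hd⟩
    · exact ih (.orStep n0 m hp hne hk hm) (.orStep n0 m hd hne hk hm.1) y hy'
  | stepAnd n0 m l' hne hk hm hrec ih =>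
    intro hp hd y hy
    rcases List.mem_cons.1 hy with rfl | hy'
    · exact ⟨hp, hd⟩
    · exact ih (.andStep n0 m hp hne hk hm.1) (.andStep n0 m hd hne hk hm) y hy'

lemma pns_last_leaf {V : Type} [LinearOrder V] {G : AOGraph V} {p d : V → ℝ≥0∞} {n : V}
    {l : List V} (hl : IsPNSPath G p d n l) :
    ∀ x, l.getLast? = some x → G.succ x = ∅ ∧ x ∈ l := by
  induction hl with
  | leaf n0 hleaf =>
    intro x hx
    simp at hx; subst hx; exact ⟨hleaf, by simp⟩
  | stepOr n0 m l' hne hk hm hrec ih =>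
    intro x hx
    obtain ⟨b, t, rfl⟩ := List.exists_cons_of_ne_nil (pns_ne_nil hrec)
    rw [List.getLast?_cons_cons] at hx
    obtain ⟨h1, h2⟩ := ih x hx
    exact ⟨h1, List.mem_cons_of_mem _ h2⟩
  | stepAnd n0 m l' hne hk hm hrec ih =>
    intro x hx
    obtain ⟨b, t, rfl⟩ := List.exists_cons_of_ne_nil (pns_ne_nil hrec)
    rw [List.getLast?_cons_cons] at hx
    obtain ⟨h1, h2⟩ := ih x hx
    exact ⟨h1, List.mem_cons_of_mem _ h2⟩

lemma pns_leaf_is_last {V : Type} [LinearOrder V] {G : AOGraph V} {p d : V → ℝ≥0∞} {n : V}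
    {l : List V} (hl : IsPNSPath G p d n l) :
    ∀ y ∈ l, G.succ y = ∅ → l.getLast? = some y := by
  induction hl with
  | leaf n0 hleaf =>
    intro y hy _
    simp at hy; subst hy; simp
  | stepOr n0 m l' hne hk hm hrec ih =>
    intro y hy hleaf
    rcases List.mem_cons.1 hy with rfl | hy'
    · exact absurd hleaf hne
    · obtain ⟨b, t, rfl⟩ := List.exists_cons_of_ne_nil (pns_ne_nil hrec)
      rw [List.getLast?_cons_cons]
      exact ih y hy' hleaf
  | stepAnd n0 m l' hne hk hm hrec ih =>
    intro y hy hleaf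
    rcases List.mem_cons.1 hy with rfl | hy'
    · exact absurd hleaf hne
    · obtain ⟨b, t, rfl⟩ := List.exists_cons_of_ne_nil (pns_ne_nil hrec)
      rw [List.getLast?_cons_cons]
      exact ih y hy' hleaf

/-- Let `G'` be a finite AND/OR tree (each node has at most
one parent; the successor relation is well-founded) with root `s`, cost
functions `p, d`, and a fixed linear order on nodes for tie-breaking. Let `G₀`
be the greedy solution base rooted at `s` (tie-break-least `c + p`-minimizing
successor at OR nodes, all successors at AND nodes) and `Ḡ₀` the greedy
disproof base rooted at `s` (tie-break-least `c + d`-minimizing successor at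
AND nodes, all successors at OR nodes). Then the set of nodes common to `G₀`
and `Ḡ₀` is exactly the set of nodes of the PNS* selection path from `s`; in
particular `G₀` and `Ḡ₀` have exactly one leaf in common, namely the leaf at
which the PNS* selection path terminates. -/
theorem greedy_bases_intersection_eq_pns_path {V : Type} [Fintype V] [LinearOrder V]
    (G : AOGraph V)
    (htree : ∀ x n n' : V, x ∈ G.succ n → x ∈ G.succ n' → n = n')
    (h hb : V → ℝ≥0∞) (Ψ : CombRule) (p d : V → ℝ≥0∞)
    (hp : IsProofCost G h Ψ p) (hd : IsDisproofCost G hb Ψ d)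
    (s : V) (l : List V) (hl : IsPNSPath G p d s l) :
    (∀ n : V, (InGreedyProofBase G p s n ∧ InGreedyDisproofBase G d s n) ↔ n ∈ l) ∧
    (∃! x : V, G.succ x = ∅ ∧ InGreedyProofBase G p s x ∧ InGreedyDisproofBase G d s x) ∧
    (∀ x : V, l.getLast? = some x →
      G.succ x = ∅ ∧ InGreedyProofBase G p s x ∧ InGreedyDisproofBase G d s x) := by
  have hiff : ∀ n : V,
      (InGreedyProofBase G p s n ∧ InGreedyDisproofBase G d s n) ↔ n ∈ l := by
    intro n
    constructor
    · rintro ⟨h1, h2⟩; exact both_mem htree hl n h1 h2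
    · intro hn; exact path_mem_bases hl .root .root n hn
  refine ⟨hiff, ?_, ?_⟩
  · obtain ⟨x, hx⟩ : ∃ x, l.getLast? = some x := by
      cases hxx : l.getLast? with
      | none => exact absurd (List.getLast?_eq_none_iff.1 hxx) (pns_ne_nil hl)
      | some x => exact ⟨x, rfl⟩
    obtain ⟨hxleaf, hxmem⟩ := pns_last_leaf hl x hx
    obtain ⟨hb1, hb2⟩ := (hiff x).2 hxmem
    refine ⟨x, ⟨hxleaf, hb1, hb2⟩, ?_⟩
    rintro y ⟨hyleaf, hy1, hy2⟩
    have hymem : y ∈ l := (hiff y).1 ⟨hy1, hy2⟩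
    have := pns_leaf_is_last hl y hymem hyleaf
    rw [hx] at this
    exact (Option.some_injective _ this).symm
  · intro x hx
    obtain ⟨hxleaf, hxmem⟩ := pns_last_leaf hl x hx
    obtain ⟨hb1, hb2⟩ := (hiff x).2 hxmem
    exact ⟨hxleaf, hb1, hb2⟩
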